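/- Let W be an admissible word of Z(A) of the form LupvR (resp. p⁻¹upvR, resp. Lvpup⁻¹), where u and v are words in (A₀ ∪ A₁)^{±1}, let θ be a rule applicable to W, and write θ·W = Lu′p′v′R (resp. θ·W = (p′)⁻¹u′p′v′R, resp. θ·W = Lv′p′u′(p′)⁻¹). Then the projections onto A of uv and u′v′ (resp. of v⁻¹uv and (v′)⁻¹u′v′, resp. of vuv⁻¹ and v′u′(v′)⁻¹) are freely equal. -/

import Mathlib

set_option maxHeartbeats 1000000

namespace SM

/-! ### Generic S-machine framework

Words are lists of (letter, sign) pairs; `true` is a positive occurrence.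
An S-machine has state letters (`Q`) and tape letters (`Y`).  Each state
letter has a sector index on its left (`ls`) and on its right (`rs`);
sector `s` carries the tape alphabet `inY s`. -/

abbrev Wrd (Y : Type) := List (Y × Bool)

def wInv {Y : Type} (w : Wrd Y) : Wrd Y := w.reverse.map fun x => (x.1, !x.2)

def IsReduced {Y : Type} (w : Wrd Y) : Prop :=
  List.Chain' (fun a b => ¬ (b.1 = a.1 ∧ b.2 = !a.2)) w

structure Machine (Q Y : Type) where
  ls : Q → ℕ
  rs : Q → ℕ
  inY : ℕ → Y → Prop

/-- A rule replaces each state letter `q` in its domain by a word `u q' v`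
(`act q = some (u, q', v)`), and carries the subsets `Y_i(θ)` (`ys`). -/
structure Rule (Q Y : Type) where
  act : Q → Option (Wrd Y × Q × Wrd Y)
  ys : ℕ → Y → Prop

/-- Sector to the right of an occurrence of a state letter. -/
def secR {Q Y : Type} (M : Machine Q Y) (x : Q × Bool) : ℕ :=
  if x.2 then M.rs x.1 else M.ls x.1

/-- Sector to the left of an occurrence of a state letter. -/
def secL {Q Y : Type} (M : Machine Q Y) (x : Q × Bool) : ℕ :=
  if x.2 then M.ls x.1 else M.rs x.1

def qd {Q : Type} [Inhabited Q] (l : List (Q × Bool)) (j : ℕ) : Q × Bool :=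
  l.getD j (default, true)

/-- An admissible word: state-letter occurrences `qs` (the base) alternating
with reduced tape words `tapes`, with consistent sectors, each tape word
over the alphabet of its sector, and the whole word freely reduced. -/
structure AdmWord {Q Y : Type} [Inhabited Q] (M : Machine Q Y) where
  qs : List (Q × Bool)
  tapes : List (Wrd Y)
  qs_ne : qs ≠ []
  hlen : tapes.length + 1 = qs.length
  consist : ∀ j, j + 1 < qs.length → secR M (qd qs j) = secL M (qd qs (j + 1))
  alph : ∀ j, j + 1 < qs.length → ∀ x ∈ tapes.getD j [], M.inY (secR M (qd qs j)) x.1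
  tred : ∀ j, IsReduced (tapes.getD j [])
  qred : ∀ j, j + 1 < qs.length → (qd qs (j + 1)).1 = (qd qs j).1 →
      (qd qs (j + 1)).2 = !(qd qs j).2 → tapes.getD j [] ≠ []

/-- `|W|_a` : the number of tape letters of `W`. -/
def alen {Q Y : Type} [Inhabited Q] {M : Machine Q Y} (W : AdmWord M) : ℕ :=
  (W.tapes.map List.length).sum

/-- `|W|` : the length of `W`. -/
def wlen {Q Y : Type} [Inhabited Q] {M : Machine Q Y} (W : AdmWord M) : ℕ :=
  W.qs.length + alen W

/-- Replacement of a single (signed) state-letter occurrence by a rule. -/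
def occRepl {Q Y : Type} (r : Rule Q Y) : Q × Bool → Option (Wrd Y × (Q × Bool) × Wrd Y)
  | (q, true) => (r.act q).map fun x => (x.1, (x.2.1, true), x.2.2)
  | (q, false) => (r.act q).map fun x => (wInv x.2.2, (x.2.1, false), wInv x.1)

/-- `Step M r W W'` : the rule `r` is applicable to `W` and `W' = r · W`. -/
def Step {Q Y : Type} [Inhabited Q] (M : Machine Q Y) (r : Rule Q Y)
    (W W' : AdmWord M) : Prop :=
  W.qs.length = W'.qs.length ∧
  (∀ j, j + 1 < W.qs.length → ∀ x ∈ W.tapes.getD j [], r.ys (secR M (qd W.qs j)) x.1) ∧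
  (∀ j, j < W.qs.length → ∃ u v, occRepl r (qd W.qs j) = some (u, qd W'.qs j, v)) ∧
  (∀ j, j + 1 < W.qs.length → ∀ u v u' v',
    occRepl r (qd W.qs j) = some (u, qd W'.qs j, v) →
    occRepl r (qd W.qs (j + 1)) = some (u', qd W'.qs (j + 1), v') →
    FreeGroup.mk (W'.tapes.getD j []) = FreeGroup.mk (v ++ W.tapes.getD j [] ++ u'))

/-! ### The machine `Z(A)`

State letters `L, p(1), p(2), p(3), R`; sector `0` is the `Lp`-sector with
alphabet `A₀ ∪ A₁`, sector `1` is the `pR`-sector with alphabet `A₀`.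
A tape letter is a pair `(a, i)` with `i = false` for `a₀ ∈ A₀` and
`i = true` for `a₁ ∈ A₁`. -/

inductive ZQ
  | L | p1 | p2 | p3 | R
deriving DecidableEq, Inhabited

abbrev ZY (A : Type) := A × Bool

def ZM (A : Type) : Machine ZQ (ZY A) where
  ls := fun q => match q with | .L => 9 | .R => 1 | _ => 0
  rs := fun q => match q with | .L => 0 | .R => 9 | _ => 1
  inY := fun s y => s = 0 ∨ (s = 1 ∧ y.2 = false)

inductive ZRulN (A : Type)
  | r1 (a : A) | r12 (a : A) | r2 (a : A) | r21 | r13 | r3 (a : A)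
deriving DecidableEq

/-- A rule of `Z(A)`: a rule name together with an inversion flag. -/
abbrev ZRul (A : Type) := ZRulN A × Bool

def zinv (A : Type) : ZRul A → ZRul A := fun x => (x.1, !x.2)

/-- Action of the positive rules of `Z(A)` on state letters. -/
def zactN (A : Type) : ZRulN A → ZQ → Option (Wrd (ZY A) × ZQ × Wrd (ZY A))
  | _, .L => some ([], .L, [])
  | _, .R => some ([], .R, [])
  | .r1 a, .p1 => some ([((a, true), false)], .p1, [((a, false), true)])
  | .r12 a, .p1 => some ([((a, false), false), ((a, true), true)], .p2, [])
  | .r2 a, .p2 => some ([((a, false), true)], .p2, [((a, false), false)])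
  | .r21, .p2 => some ([], .p1, [])
  | .r13, .p1 => some ([], .p3, [])
  | .r3 a, .p3 => some ([((a, false), true)], .p3, [((a, false), false)])
  | _, _ => none

/-- Action of the rules of `Z(A)` (including inverse rules). -/
def zact (A : Type) : ZRul A → ZQ → Option (Wrd (ZY A) × ZQ × Wrd (ZY A))
  | (n, false), q => zactN A n q
  | (_, true), .L => some ([], .L, [])
  | (_, true), .R => some ([], .R, [])
  | (.r1 a, true), .p1 => some ([((a, true), true)], .p1, [((a, false), false)])
  | (.r12 a, true), .p2 => some ([((a, true), false), ((a, false), true)], .p1, [])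
  | (.r2 a, true), .p2 => some ([((a, false), false)], .p2, [((a, false), true)])
  | (.r21, true), .p1 => some ([], .p2, [])
  | (.r13, true), .p3 => some ([], .p1, [])
  | (.r3 a, true), .p3 => some ([((a, false), false)], .p3, [((a, false), true)])
  | (_, true), _ => none

/-- The sets `Y_i(θ)` of the rules of `Z(A)`. -/
def zysN (A : Type) : ZRulN A → ℕ → ZY A → Prop
  | .r21, s, _ => s = 0
  | .r13, s, y => s = 1 ∧ y.2 = false
  | .r3 _, s, y => (s = 0 ∨ s = 1) ∧ y.2 = false
  | _, s, y => s = 0 ∨ (s = 1 ∧ y.2 = false)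

def zys (A : Type) (r : ZRul A) : ℕ → ZY A → Prop := zysN A r.1

def zrule (A : Type) (r : ZRul A) : Rule ZQ (ZY A) := ⟨zact A r, zys A r⟩

/-- A reduced computation of the machine `Z(A)`:
`W 0 →_{h 0} W 1 →_{h 1} ⋯ →_{h (t-1)} W t` with freely reduced history. -/
structure ZComp (A : Type) where
  t : ℕ
  W : ℕ → AdmWord (ZM A)
  h : ℕ → ZRul A
  steps : ∀ i, i < t → Step (ZM A) (zrule A (h i)) (W i) (W (i + 1))
  red : ∀ i, i + 1 < t → h (i + 1) ≠ zinv A (h i)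

def isP (q : ZQ) : Prop := q = .p1 ∨ q = .p2 ∨ q = .p3

def baseLpR {A : Type} (W : AdmWord (ZM A)) : Prop :=
  ∃ p, isP p ∧ W.qs = [(ZQ.L, true), (p, true), (ZQ.R, true)]

def baseIPR {A : Type} (W : AdmWord (ZM A)) : Prop :=
  ∃ p p', isP p ∧ isP p' ∧ W.qs = [(p, false), (p', true), (ZQ.R, true)]

/-- For a three-letter base ending with `R`: `W` contains the subword `st·R`. -/
def hasPR {A : Type} (W : AdmWord (ZM A)) (st : ZQ) : Prop :=
  qd W.qs 1 = (st, true) ∧ W.tapes.getD 1 [] = []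

/-- All tape letters of `W` lie in `A₀^{±1}`. -/
def allA0 {A : Type} (W : AdmWord (ZM A)) : Prop :=
  ∀ j, ∀ x ∈ W.tapes.getD j [], x.1.2 = false

/-- `u` is a positive word over `A₀`. -/
def Pos0 {A : Type} (u : Wrd (ZY A)) : Prop :=
  ∀ x ∈ u, x.2 = true ∧ x.1.2 = false

/-- Projection of a tape word onto `A` (sending `a₀, a₁` to `a`). -/
def projA {A : Type} (w : Wrd (ZY A)) : Wrd A := w.map fun x => (x.1.1, x.2)


section Aux

variable {A : Type}

lemma mk_ft (a : A) : FreeGroup.mk [(a,false),(a,true)] = 1 := by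
  rw [show [(a,false),(a,true)] = FreeGroup.invRev [(a,true)] ++ [(a,true)] from rfl,
    ← FreeGroup.mul_mk, ← FreeGroup.inv_mk, inv_mul_cancel]

lemma mk_tf (a : A) : FreeGroup.mk [(a,true),(a,false)] = 1 := by
  rw [show [(a,true),(a,false)] = [(a,true)] ++ FreeGroup.invRev [(a,true)] from rfl,
    ← FreeGroup.mul_mk, ← FreeGroup.inv_mk, mul_inv_cancel]

lemma mk_projA_append (w1 w2 : Wrd (ZY A)) :
    FreeGroup.mk (projA (w1 ++ w2)) = FreeGroup.mk (projA w1) * FreeGroup.mk (projA w2) := by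
  rw [FreeGroup.mul_mk]; simp [projA]

lemma mk_projA_wInv (w : Wrd (ZY A)) :
    FreeGroup.mk (projA (wInv w)) = (FreeGroup.mk (projA w))⁻¹ := by
  rw [FreeGroup.inv_mk]; congr 1
  simp [projA, wInv, FreeGroup.invRev, List.map_reverse]

lemma proj_of_mk_eq {w1 w2 : Wrd (ZY A)} (h : FreeGroup.mk w1 = FreeGroup.mk w2) :
    FreeGroup.mk (projA w1) = FreeGroup.mk (projA w2) := by
  have := congrArg (FreeGroup.map Prod.fst) h
  rwa [FreeGroup.map.mk, FreeGroup.map.mk] at this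

lemma rule_cancel (r : ZRul A) (q : ZQ) (b : Bool) (u v : Wrd (ZY A)) (x' : ZQ × Bool)
    (hq : isP q) (h : occRepl (zrule A r) (q, b) = some (u, x', v)) :
    FreeGroup.mk (projA u) * FreeGroup.mk (projA v) = 1 := by
  obtain ⟨n, s⟩ := r
  rcases hq with rfl | rfl | rfl <;> cases s <;> cases b <;> cases n <;>
    simp only [occRepl, zrule, zact, zactN, wInv, Option.map_some, Option.map_none,
      Option.some.injEq, Prod.mk.injEq, List.reverse_cons, List.reverse_nil,
      List.nil_append, List.cons_append, List.map_cons, List.map_nil,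
      reduceCtorEq, Bool.not_true, Bool.not_false] at h <;>
    first
      | exact h.elim
      | (obtain ⟨h1, h2, h3⟩ := h
         subst h1; subst h3
         simp [projA, FreeGroup.mul_mk, mk_ft, mk_tf, ← FreeGroup.one_eq_mk])

lemma rule_pair (r : ZRul A) (q q' : ZQ) (u v u' v' : Wrd (ZY A)) (x y : ZQ × Bool)
    (hq : isP q) (hq' : isP q')
    (h0 : occRepl (zrule A r) (q, false) = some (u, x, v))
    (h1 : occRepl (zrule A r) (q', true) = some (u', y, v')) :
    FreeGroup.mk (projA u) * FreeGroup.mk (projA v') = 1 := by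
  obtain ⟨n, s⟩ := r
  rcases hq with rfl | rfl | rfl <;> rcases hq' with rfl | rfl | rfl <;> cases s <;> cases n <;>
    simp only [occRepl, zrule, zact, zactN, wInv, Option.map_some, Option.map_none,
      Option.some.injEq, Prod.mk.injEq, List.reverse_cons, List.reverse_nil,
      List.nil_append, List.cons_append, List.map_cons, List.map_nil,
      reduceCtorEq, Bool.not_true, Bool.not_false] at h0 h1 <;>
    first
      | exact h0.elim
      | exact h1.elim
      | (obtain ⟨hu, -, -⟩ := h0
         obtain ⟨-, -, hv⟩ := h1
         subst hu; subst hv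
         simp [projA, FreeGroup.mul_mk, mk_ft, mk_tf, ← FreeGroup.one_eq_mk])

lemma endL (r : ZRul A) : occRepl (zrule A r) (ZQ.L, true) = some ([], (ZQ.L, true), []) := by
  obtain ⟨n, s⟩ := r; cases s <;> cases n <;> rfl

lemma endR (r : ZRul A) : occRepl (zrule A r) (ZQ.R, true) = some ([], (ZQ.R, true), []) := by
  obtain ⟨n, s⟩ := r; cases s <;> cases n <;> rfl

end Aux

/-- Lemma 2.3.  For a single rule application of `Z(A)`,
the projections onto `A` of `uv` (resp. `v⁻¹uv`, resp. `vuv⁻¹`) of the words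
`W = LupvR` (resp. `p⁻¹upvR`, resp. `Lvpup⁻¹`) and of `θ·W` are freely equal. -/
theorem statement_3 (A : Type) (r : ZRul A) (W W' : AdmWord (ZM A))
    (hstep : Step (ZM A) (zrule A r) W W') :
    (∀ p p' u v u' v', isP p → isP p' →
      W.qs = [(ZQ.L, true), (p, true), (ZQ.R, true)] → W.tapes = [u, v] →
      W'.qs = [(ZQ.L, true), (p', true), (ZQ.R, true)] → W'.tapes = [u', v'] →
      FreeGroup.mk (projA (u ++ v)) = FreeGroup.mk (projA (u' ++ v'))) ∧
    (∀ p0 p p0' p' u v u' v', isP p0 → isP p → isP p0' → isP p' →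
      W.qs = [(p0, false), (p, true), (ZQ.R, true)] → W.tapes = [u, v] →
      W'.qs = [(p0', false), (p', true), (ZQ.R, true)] → W'.tapes = [u', v'] →
      FreeGroup.mk (projA (wInv v ++ u ++ v)) =
        FreeGroup.mk (projA (wInv v' ++ u' ++ v'))) ∧
    (∀ p0 p p0' p' u v u' v', isP p0 → isP p → isP p0' → isP p' →
      W.qs = [(ZQ.L, true), (p, true), (p0, false)] → W.tapes = [v, u] →
      W'.qs = [(ZQ.L, true), (p', true), (p0', false)] → W'.tapes = [v', u'] →
      FreeGroup.mk (projA (v ++ u ++ wInv v)) =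
        FreeGroup.mk (projA (v' ++ u' ++ wInv v'))) := by
  obtain ⟨hlen, hys, hocc, htp⟩ := hstep
  refine ⟨?_, ?_, ?_⟩
  · intro p p' u v u' v' hp hp' hqs ht hqs' ht'
    obtain ⟨up, vp, hpocc⟩ := hocc 1 (by simp [hqs])
    have hL : occRepl (zrule A r) (qd W.qs 0) = some ([], qd W'.qs 0, []) := by
      simp only [qd, hqs, hqs', List.getD]; simpa using endL r
    have hR : occRepl (zrule A r) (qd W.qs 2) = some ([], qd W'.qs 2, []) := by
      simp only [qd, hqs, hqs', List.getD]; simpa using endR r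
    have e0 := htp 0 (by simp [hqs]) [] [] up vp hL hpocc
    have e1 := htp 1 (by simp [hqs]) up vp [] [] hpocc hR
    rw [ht, ht'] at e0 e1
    simp only [List.getD, List.getElem?_cons_zero, List.getElem?_cons_succ, Option.getD_some, List.nil_append, List.append_nil] at e0 e1
    have E0 := proj_of_mk_eq e0
    have E1 := proj_of_mk_eq e1
    rw [mk_projA_append] at E0 E1
    have cancel : FreeGroup.mk (projA up) * FreeGroup.mk (projA vp) = 1 :=
      rule_cancel r p true up vp (qd W'.qs 1) hp
        (by rw [show qd W.qs 1 = (p, true) by simp [qd, hqs, List.getD]] at hpocc; exact hpocc)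
    have hvp : FreeGroup.mk (projA vp) = (FreeGroup.mk (projA up))⁻¹ :=
      eq_inv_of_mul_eq_one_right cancel
    rw [mk_projA_append, mk_projA_append, E0, E1, hvp]
    group
  · intro p0 p p0' p' u v u' v' hp0 hp hp0' hp' hqs ht hqs' ht'
    obtain ⟨u0, v0, h0occ⟩ := hocc 0 (by simp [hqs])
    obtain ⟨up, vp, hpocc⟩ := hocc 1 (by simp [hqs])
    have hR : occRepl (zrule A r) (qd W.qs 2) = some ([], qd W'.qs 2, []) := by
      simp only [qd, hqs, hqs', List.getD]; simpa using endR r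
    have e0 := htp 0 (by simp [hqs]) u0 v0 up vp h0occ hpocc
    have e1 := htp 1 (by simp [hqs]) up vp [] [] hpocc hR
    rw [ht, ht'] at e0 e1
    simp only [List.getD, List.getElem?_cons_zero, List.getElem?_cons_succ, Option.getD_some, List.nil_append, List.append_nil] at e0 e1
    have E0 := proj_of_mk_eq e0
    have E1 := proj_of_mk_eq e1
    rw [mk_projA_append, mk_projA_append] at E0
    rw [mk_projA_append] at E1
    have hq0 : qd W.qs 0 = (p0, false) := by simp [qd, hqs, List.getD]
    have hq1 : qd W.qs 1 = (p, true) := by simp [qd, hqs, List.getD]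
    rw [hq0] at h0occ
    rw [hq1] at hpocc
    have cancel : FreeGroup.mk (projA up) * FreeGroup.mk (projA vp) = 1 :=
      rule_cancel r p true up vp (qd W'.qs 1) hp hpocc
    have cancel0 : FreeGroup.mk (projA u0) * FreeGroup.mk (projA v0) = 1 :=
      rule_cancel r p0 false u0 v0 (qd W'.qs 0) hp0 h0occ
    have pair : FreeGroup.mk (projA u0) * FreeGroup.mk (projA vp) = 1 :=
      rule_pair r p0 p u0 v0 up vp (qd W'.qs 0) (qd W'.qs 1) hp0 hp h0occ hpocc
    have hvp : FreeGroup.mk (projA vp) = (FreeGroup.mk (projA up))⁻¹ :=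
      eq_inv_of_mul_eq_one_right cancel
    have hv0 : FreeGroup.mk (projA v0) = FreeGroup.mk (projA vp) :=
      mul_left_cancel (cancel0.trans pair.symm)
    have hu0 : FreeGroup.mk (projA v0) = (FreeGroup.mk (projA up))⁻¹ := hv0.trans hvp
    rw [mk_projA_append, mk_projA_append, mk_projA_wInv,
      mk_projA_append, mk_projA_append, mk_projA_wInv, E0, E1, hvp, hu0]
    group
  · intro p0 p p0' p' u v u' v' hp0 hp hp0' hp' hqs ht hqs' ht'
    obtain ⟨up, vp, hpocc⟩ := hocc 1 (by simp [hqs])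
    obtain ⟨u0, v0, h0occ⟩ := hocc 2 (by simp [hqs])
    have hL : occRepl (zrule A r) (qd W.qs 0) = some ([], qd W'.qs 0, []) := by
      simp only [qd, hqs, hqs', List.getD]; simpa using endL r
    have e0 := htp 0 (by simp [hqs]) [] [] up vp hL hpocc
    have e1 := htp 1 (by simp [hqs]) up vp u0 v0 hpocc h0occ
    rw [ht, ht'] at e0 e1
    simp only [List.getD, List.getElem?_cons_zero, List.getElem?_cons_succ, Option.getD_some, List.nil_append, List.append_nil] at e0 e1
    have E0 := proj_of_mk_eq e0
    have E1 := proj_of_mk_eq e1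
    rw [mk_projA_append] at E0
    rw [mk_projA_append, mk_projA_append] at E1
    have hq1 : qd W.qs 1 = (p, true) := by simp [qd, hqs, List.getD]
    have hq2 : qd W.qs 2 = (p0, false) := by simp [qd, hqs, List.getD]
    rw [hq1] at hpocc
    rw [hq2] at h0occ
    have cancel : FreeGroup.mk (projA up) * FreeGroup.mk (projA vp) = 1 :=
      rule_cancel r p true up vp (qd W'.qs 1) hp hpocc
    have pair : FreeGroup.mk (projA u0) * FreeGroup.mk (projA vp) = 1 :=
      rule_pair r p0 p u0 v0 up vp (qd W'.qs 2) (qd W'.qs 1) hp0 hp h0occ hpocc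
    have hvp : FreeGroup.mk (projA vp) = (FreeGroup.mk (projA up))⁻¹ :=
      eq_inv_of_mul_eq_one_right cancel
    have hu0 : FreeGroup.mk (projA u0) = FreeGroup.mk (projA up) := by
      rw [hvp] at pair
      exact (eq_of_mul_inv_eq_one pair)
    rw [mk_projA_append, mk_projA_append, mk_projA_wInv,
      mk_projA_append, mk_projA_append, mk_projA_wInv, E0, E1, hvp, hu0]
    group


end SM
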